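/- Let H be a complex Hilbert space and let α, β₁, …, βₙ be vectors in H. If the operator inequality |α⟩⟨α| ≤ Σᵢ₌₁ⁿ |βᵢ⟩⟨βᵢ| holds (equivalently, for every vector γ in H one has |⟨γ, α⟩|² ≤ Σᵢ₌₁ⁿ |⟨γ, βᵢ⟩|²), then there exist complex numbers c₁, …, cₙ such that α = Σᵢ₌₁ⁿ cᵢ βᵢ and Σᵢ₌₁ⁿ |cᵢ|² ≤ 1. -/

import Mathlib

open scoped InnerProductSpace

section Aux

variable {H : Type*} [NormedAddCommGroup H] [InnerProductSpace ℂ H]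
variable {n : ℕ}

/-- The map `γ ↦ (⟪βᵢ, γ⟫)ᵢ` as a linear map into Euclidean space. -/
noncomputable def auxPhi (β : Fin n → H) : H →ₗ[ℂ] EuclideanSpace ℂ (Fin n) where
  toFun γ := (WithLp.equiv 2 (Fin n → ℂ)).symm (fun i => ⟪β i, γ⟫_ℂ)
  map_add' x y := by ext i; simp [inner_add_right]
  map_smul' c x := by ext i; simp [inner_smul_right]

lemma auxPhi_apply (β : Fin n → H) (γ : H) (i : Fin n) :
    auxPhi β γ i = ⟪β i, γ⟫_ℂ := rfl

lemma auxPhi_norm_sq (β : Fin n → H) (γ : H) :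
    ‖auxPhi β γ‖ ^ 2 = ∑ i, ‖⟪γ, β i⟫_ℂ‖ ^ 2 := by
  rw [EuclideanSpace.norm_eq, Real.sq_sqrt (by positivity)]
  exact Finset.sum_congr rfl fun i _ => by rw [auxPhi_apply, norm_inner_symm]

end Aux

set_option maxHeartbeats 1000000 in
/-- **Lemma 1, necessity.** If the operator inequality `|α⟩⟨α| ≤ ∑ i, |βᵢ⟩⟨βᵢ|` holds in a
complex Hilbert space (equivalently, `|⟨γ,α⟩|² ≤ ∑ i |⟨γ,βᵢ⟩|²` for every `γ`), then there
are complex numbers `cᵢ` with `α = ∑ i, cᵢ βᵢ` and `∑ i |cᵢ|² ≤ 1`. -/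
theorem rankOne_le_sum_rankOne_imp_combination
    {H : Type*} [NormedAddCommGroup H] [InnerProductSpace ℂ H] [CompleteSpace H]
    {n : ℕ} (α : H) (β : Fin n → H)
    (h : ∀ γ : H, ‖⟪γ, α⟫_ℂ‖ ^ 2 ≤ ∑ i, ‖⟪γ, β i⟫_ℂ‖ ^ 2) :
    ∃ c : Fin n → ℂ, α = ∑ i, c i • β i ∧ ∑ i, ‖c i‖ ^ 2 ≤ 1 := by
  classical
  obtain ⟨Φ, hΦapp⟩ : ∃ Φ : H →ₗ[ℂ] EuclideanSpace ℂ (Fin n),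
      ∀ γ i, Φ γ i = ⟪β i, γ⟫_ℂ := ⟨auxPhi β, fun γ i => rfl⟩
  letI _inst : InnerProductSpace ℂ ↥(LinearMap.range Φ) := inferInstance
  have hΦnorm : ∀ γ : H, ‖Φ γ‖ ^ 2 = ∑ i, ‖⟪γ, β i⟫_ℂ‖ ^ 2 := by
    intro γ
    rw [EuclideanSpace.norm_eq, Real.sq_sqrt (by positivity)]
    exact Finset.sum_congr rfl fun i _ => by rw [hΦapp, norm_inner_symm]
  let f : H →ₗ[ℂ] ℂ := (innerSL ℂ α).toLinearMap
  have hf_apply : ∀ γ : H, f γ = ⟪α, γ⟫_ℂ := fun γ => rfl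
  have hker : LinearMap.ker Φ ≤ LinearMap.ker f := by
    intro γ hγ
    have hγ0 : ∀ i, ⟪γ, β i⟫_ℂ = 0 := by
      intro i
      have h1 : Φ γ i = 0 := by rw [LinearMap.mem_ker.mp hγ]; rfl
      rw [hΦapp] at h1
      exact inner_eq_zero_symm.mpr h1
    have h2 : ‖⟪γ, α⟫_ℂ‖ ^ 2 ≤ 0 := by
      have := h γ
      rwa [Finset.sum_eq_zero (fun i _ => by rw [hγ0 i]; norm_num)] at this
    have h3 : ⟪γ, α⟫_ℂ = 0 := by
      have : ‖⟪γ, α⟫_ℂ‖ = 0 := by nlinarith [norm_nonneg ⟪γ, α⟫_ℂ]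
      simpa using this
    rw [LinearMap.mem_ker, hf_apply]
    exact inner_eq_zero_symm.mpr h3
  have hg₀_apply : ∀ γ : H,
      (((LinearMap.ker Φ).liftQ f hker) ∘ₗ Φ.quotKerEquivRange.symm.toLinearMap)
        ⟨Φ γ, LinearMap.mem_range_self Φ γ⟩ = ⟪α, γ⟫_ℂ := by
    intro γ
    have h1 : Φ.quotKerEquivRange (Submodule.Quotient.mk γ)
        = ⟨Φ γ, LinearMap.mem_range_self Φ γ⟩ := by
      apply Subtype.ext
      simp [LinearMap.quotKerEquivRange]
    have h2 : Φ.quotKerEquivRange.symm ⟨Φ γ, LinearMap.mem_range_self Φ γ⟩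
        = Submodule.Quotient.mk γ := by
      rw [← h1]; exact Φ.quotKerEquivRange.symm_apply_apply _
    simp only [LinearMap.coe_comp, Function.comp_apply, LinearEquiv.coe_coe, h2]
    rw [Submodule.liftQ_apply, hf_apply]
  set g₀ : LinearMap.range Φ →ₗ[ℂ] ℂ :=
    ((LinearMap.ker Φ).liftQ f hker) ∘ₗ Φ.quotKerEquivRange.symm.toLinearMap with hg₀def
  have hg₀_bound : ∀ x : LinearMap.range Φ, ‖g₀ x‖ ≤ 1 * ‖x‖ := by
    rintro ⟨x, hx⟩
    obtain ⟨γ, rfl⟩ := hx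
    rw [hg₀def, hg₀_apply γ, one_mul]
    have hn : ‖(⟨Φ γ, LinearMap.mem_range_self Φ γ⟩ : LinearMap.range Φ)‖ = ‖Φ γ‖ := rfl
    have hb : ‖⟪α, γ⟫_ℂ‖ ^ 2 ≤ ‖Φ γ‖ ^ 2 := by
      rw [hΦnorm, norm_inner_symm]
      exact h γ
    rw [hn]
    nlinarith [norm_nonneg ⟪α, γ⟫_ℂ, norm_nonneg (Φ γ)]
  set g : StrongDual ℂ ↥(LinearMap.range Φ) := g₀.mkContinuous 1 hg₀_bound with hgdef
  have hgnorm : ‖g‖ ≤ 1 := g₀.mkContinuous_norm_le zero_le_one hg₀_bound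
  set c' : LinearMap.range Φ := (InnerProductSpace.toDual ℂ (LinearMap.range Φ)).symm g
    with hc'def
  have hc'norm : ‖c'‖ ≤ 1 := by
    rw [hc'def, LinearIsometryEquiv.norm_map]
    exact hgnorm
  have hc'inner : ∀ x : LinearMap.range Φ, ⟪c', x⟫_ℂ = g x := by
    intro x
    rw [hc'def]
    exact InnerProductSpace.toDual_symm_apply
  refine ⟨fun i => (c' : EuclideanSpace ℂ (Fin n)) i, ?_, ?_⟩
  · apply ext_inner_right ℂ
    intro γ
    have h1 : ⟪c', (⟨Φ γ, LinearMap.mem_range_self Φ γ⟩ : LinearMap.range Φ)⟫_ℂ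
        = ⟪α, γ⟫_ℂ := by
      rw [hc'inner]
      exact hg₀_apply γ
    have h2 : ⟪c', (⟨Φ γ, LinearMap.mem_range_self Φ γ⟩ : LinearMap.range Φ)⟫_ℂ
        = ∑ i, ⟪(c' : EuclideanSpace ℂ (Fin n)) i • β i, γ⟫_ℂ := by
      rw [Submodule.coe_inner, PiLp.inner_apply]
      refine Finset.sum_congr rfl fun i _ => ?_
      rw [inner_smul_left, RCLike.inner_apply']
      congr 1
      exact (hΦapp γ i)
    rw [← h1, h2, ← sum_inner]
  · have he : ∑ i, ‖(c' : EuclideanSpace ℂ (Fin n)) i‖ ^ 2 = ‖c'‖ ^ 2 := by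
      have hn : ‖c'‖ = ‖(c' : EuclideanSpace ℂ (Fin n))‖ := rfl
      rw [hn, EuclideanSpace.norm_eq, Real.sq_sqrt (by positivity)]
    rw [he]
    nlinarith [norm_nonneg c']
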